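/- If the bounded linear operator τ : D(A) → X has dense range, then for every z ∈ ρ(A) the operator Ğ(z) = τ∘(-A+z)^{-1} has dense range in X and G(z) = C_H^{-1}∘Ğ(z*)′ is injective. -/

import Mathlib

open scoped ComplexConjugate

/-- `G(z) := C_H⁻¹ ∘ Ğ(z*)′`, with `Ğ(z) = τ ∘ R(z)` and `C_H` the canonical
conjugate-linear isomorphism `H ≅ H′`. -/
noncomputable def Gop
    {H : Type*} [NormedAddCommGroup H] [InnerProductSpace ℂ H] [CompleteSpace H]
    {D : Type*} [NormedAddCommGroup D] [NormedSpace ℂ D]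
    {X : Type*} [NormedAddCommGroup X] [NormedSpace ℂ X]
    (R : ℂ → (H →L[ℂ] D)) (τ : D →L[ℂ] X) (z : ℂ) (ℓ : X →L[ℂ] ℂ) : H :=
  (InnerProductSpace.toDual ℂ H).symm (ℓ.comp (τ.comp (R (conj z))))

/-- If `τ : D(A) → X` has dense range then, for every `z` in the
resolvent set, `Ğ(z) = τ ∘ R(z)` has dense range and `G(z) = C_H⁻¹ ∘ Ğ(z*)′` is
injective.  (Recall that the resolvent `R(z) : H → D(A)` is surjective.) -/
theorem stmt2
    {H : Type*} [NormedAddCommGroup H] [InnerProductSpace ℂ H] [CompleteSpace H]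
    {D : Type*} [NormedAddCommGroup D] [NormedSpace ℂ D]
    {X : Type*} [NormedAddCommGroup X] [NormedSpace ℂ X]
    (ρ : Set ℂ) (R : ℂ → (H →L[ℂ] D)) (ι : D →L[ℂ] H) (τ : D →L[ℂ] X)
    (hρ : ∀ z ∈ ρ, conj z ∈ ρ)
    (hsurj : ∀ z ∈ ρ, Function.Surjective (R z))
    (hτ : DenseRange τ)
    {z : ℂ} (hz : z ∈ ρ) :
    DenseRange (τ.comp (R z)) ∧
    Function.Injective (fun ℓ : X →L[ℂ] ℂ => Gop R τ z ℓ) := by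
  constructor
  · have : Set.range (τ.comp (R z)) = Set.range τ := by
      rw [ContinuousLinearMap.coe_comp']
      rw [Set.range_comp, Set.range_eq_univ.mpr (hsurj z hz), Set.image_univ]
    unfold DenseRange
    rw [this]; exact hτ
  · intro ℓ₁ ℓ₂ h
    simp only [Gop] at h
    have h2 : ℓ₁.comp (τ.comp (R (conj z))) = ℓ₂.comp (τ.comp (R (conj z))) :=
      (InnerProductSpace.toDual ℂ H).symm.injective h
    have hD : ∀ d : D, ℓ₁ (τ d) = ℓ₂ (τ d) := by
      intro d
      obtain ⟨h', rfl⟩ := hsurj _ (hρ z hz) d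
      exact congrFun (congrArg DFunLike.coe h2) h'
    ext x
    have := hτ
    refine DenseRange.induction_on hτ x ?_ hD
    exact isClosed_eq ℓ₁.continuous ℓ₂.continuous
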